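/- Let θ : ℝ → ℝ be bounded, measurable, and even (θ(−r) = θ(r) for all r), let f₀ : ℝ → ℝ be nonnegative and Lebesgue integrable, and let a ∈ ℝ. Then the function (x₁,x₂) ↦ θ(x₁−x₂) f₀(x₁) f₀(x₂) Ψ_a(x₁,x₂) is Lebesgue integrable on ℝ², and μ_θ[f₀; a] = 2 ∫₀^∞ θ(y) [ ∫_{a−y}^{a−y/2} f₀(z) f₀(z+y) dz − ∫_{a−y/2}^{a} f₀(z) f₀(z+y) dz ] dy. -/

import Mathlib

open MeasureTheory Set

/-- The measurement bracket `Ψ_a(x₁,x₂) = 2·𝟙[(x₁+x₂)/2 ≤ a] − 𝟙[x₁ ≤ a] − 𝟙[x₂ ≤ a]`. -/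
noncomputable def Psi (a x₁ x₂ : ℝ) : ℝ :=
  2 * (if (x₁ + x₂) / 2 ≤ a then (1 : ℝ) else 0)
    - (if x₁ ≤ a then (1 : ℝ) else 0) - (if x₂ ≤ a then (1 : ℝ) else 0)

/-- The initial measurement rate `μ_θ[f₀; a]`. -/
noncomputable def mu (θ f₀ : ℝ → ℝ) (a : ℝ) : ℝ :=
  ∫ p : ℝ × ℝ, θ (p.1 - p.2) * f₀ p.1 * f₀ p.2 * Psi a p.1 p.2

lemma Psi_indicator (a y : ℝ) (hy : 0 < y) (z : ℝ) :
    Psi a z (z + y) =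
      (Ioc (a - y) (a - y/2)).indicator (fun _ => (1:ℝ)) z
        - (Ioc (a - y/2) a).indicator (fun _ => (1:ℝ)) z := by
  have e2 : ((z + (z + y)) / 2 ≤ a) ↔ (z ≤ a - y/2) := by constructor <;> intro <;> linarith
  have e1 : ((z + y) ≤ a) ↔ (z ≤ a - y) := by constructor <;> intro <;> linarith
  simp only [Psi, indicator_apply, mem_Ioc, e1, e2]
  rcases le_or_gt z (a - y) with k1 | k1
  · have m1 : ¬ (a - y < z ∧ z ≤ a - y / 2) := by rintro ⟨h, _⟩; linarith
    have m2 : ¬ (a - y / 2 < z ∧ z ≤ a) := by rintro ⟨h, _⟩; linarith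
    have c2 : z ≤ a - y/2 := by linarith
    have c3 : z ≤ a := by linarith
    have d1 : ¬ a - y < z := not_lt.2 k1
    have d2 : ¬ a - y/2 < z := not_lt.2 c2
    norm_num [k1, m1, m2, c2, c3, d1, d2]
  · rcases le_or_gt z (a - y/2) with k2 | k2
    · have m1 : (a - y < z ∧ z ≤ a - y / 2) := ⟨k1, k2⟩
      have m2 : ¬ (a - y / 2 < z ∧ z ≤ a) := by rintro ⟨h, _⟩; linarith
      have c1 : ¬ z ≤ a - y := not_le.2 k1
      have c3 : z ≤ a := by linarith
      have d2 : ¬ a - y/2 < z := not_lt.2 k2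
      norm_num [m1, m2, c1, c3, k1, k2, d2]
    · rcases le_or_gt z a with k3 | k3
      · have m1 : ¬ (a - y < z ∧ z ≤ a - y / 2) := by rintro ⟨_, h⟩; linarith
        have m2 : (a - y / 2 < z ∧ z ≤ a) := ⟨k2, k3⟩
        have c1 : ¬ z ≤ a - y := by push_neg; linarith
        have c2 : ¬ z ≤ a - y/2 := not_le.2 k2
        norm_num [m1, m2, c1, c2, k3, k2]
      · have m1 : ¬ (a - y < z ∧ z ≤ a - y / 2) := by rintro ⟨_, h⟩; linarith
        have m2 : ¬ (a - y / 2 < z ∧ z ≤ a) := by rintro ⟨_, h⟩; linarith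
        have c1 : ¬ z ≤ a - y := by push_neg; linarith
        have c2 : ¬ z ≤ a - y/2 := not_le.2 k2
        have c3 : ¬ z ≤ a := not_le.2 k3
        norm_num [m1, m2, c1, c2, c3, k2, k3]

lemma Psi_meas (a : ℝ) : Measurable (fun p : ℝ × ℝ => Psi a p.1 p.2) := by
  have h1 : Measurable fun p : ℝ × ℝ => (if (p.1 + p.2)/2 ≤ a then (1:ℝ) else 0) :=
    Measurable.ite (measurableSet_le ((measurable_fst.add measurable_snd).div_const 2)
      measurable_const) measurable_const measurable_const
  have h2 : Measurable fun p : ℝ × ℝ => (if p.1 ≤ a then (1:ℝ) else 0) :=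
    Measurable.ite (measurableSet_le measurable_fst measurable_const)
      measurable_const measurable_const
  have h3 : Measurable fun p : ℝ × ℝ => (if p.2 ≤ a then (1:ℝ) else 0) :=
    Measurable.ite (measurableSet_le measurable_snd measurable_const)
      measurable_const measurable_const
  exact ((h1.const_mul 2).sub h2).sub h3

lemma Psi_bound (a x₁ x₂ : ℝ) : |Psi a x₁ x₂| ≤ 4 := by
  simp only [Psi]; split_ifs <;> norm_num

lemma Psi_symm (a u v : ℝ) : Psi a u v = Psi a v u := by
  simp only [Psi, add_comm u v]; ring

theorem stmt1 (θ f₀ : ℝ → ℝ) (a : ℝ)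
    (hθm : Measurable θ) (hθb : ∃ K, ∀ r, |θ r| ≤ K) (hθe : ∀ r, θ (-r) = θ r)
    (hf₀ : ∀ x, 0 ≤ f₀ x) (hf₀i : Integrable f₀) :
    Integrable (fun p : ℝ × ℝ => θ (p.1 - p.2) * f₀ p.1 * f₀ p.2 * Psi a p.1 p.2) ∧
      mu θ f₀ a
        = 2 * ∫ y in Set.Ioi (0:ℝ),
            θ y * ((∫ z in (a - y)..(a - y / 2), f₀ z * f₀ (z + y))
              - ∫ z in (a - y / 2)..a, f₀ z * f₀ (z + y)) := by
  obtain ⟨K, hK⟩ := hθb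
  have hK0 : 0 ≤ K := (abs_nonneg _).trans (hK 0)
  have hvol : (volume : Measure (ℝ × ℝ)) = (volume : Measure ℝ).prod volume :=
    Measure.volume_eq_prod ℝ ℝ
  set F : ℝ × ℝ → ℝ := fun p => θ (p.1 - p.2) * f₀ p.1 * f₀ p.2 * Psi a p.1 p.2 with hFdef
  have hfm : AEStronglyMeasurable f₀ (volume : Measure ℝ) := hf₀i.aestronglyMeasurable
  have hFm : AEStronglyMeasurable F ((volume : Measure ℝ).prod volume) :=
    (((hθm.comp (measurable_fst.sub measurable_snd)).aestronglyMeasurable.mul hfm.comp_fst).mul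
      hfm.comp_snd).mul (Psi_meas a).aestronglyMeasurable
  have hff : Integrable (fun p : ℝ × ℝ => f₀ p.1 * f₀ p.2) ((volume : Measure ℝ).prod volume) :=
    hf₀i.mul_prod hf₀i
  have hFi : Integrable F ((volume : Measure ℝ).prod volume) := by
    refine (hff.const_mul (K * 4)).mono' hFm (Filter.Eventually.of_forall fun p => ?_)
    have h0 := Psi_bound a p.1 p.2
    have h1 := hK (p.1 - p.2)
    have h2 := hf₀ p.1; have h3 := hf₀ p.2
    calc ‖F p‖ = |θ (p.1 - p.2)| * f₀ p.1 * f₀ p.2 * |Psi a p.1 p.2| := by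
          simp only [hFdef, Real.norm_eq_abs, abs_mul, abs_of_nonneg h2, abs_of_nonneg h3]
      _ ≤ K * f₀ p.1 * f₀ p.2 * 4 := by
          refine mul_le_mul ?_ h0 (abs_nonneg _) (by positivity)
          exact mul_le_mul_of_nonneg_right (mul_le_mul_of_nonneg_right h1 h2) h3
      _ = K * 4 * (f₀ p.1 * f₀ p.2) := by ring
  have hFi' : Integrable F (volume : Measure (ℝ × ℝ)) := by rw [hvol]; exact hFi
  refine ⟨hFi', ?_⟩
  -- shear change of variables
  have hT : MeasurePreserving (fun z : ℝ × ℝ => (z.1, z.1 + z.2))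
      ((volume : Measure ℝ).prod volume) ((volume : Measure ℝ).prod volume) :=
    measurePreserving_prod_add volume volume
  have hHi : Integrable (fun q : ℝ × ℝ => F (q.1, q.1 + q.2))
      ((volume : Measure ℝ).prod volume) :=
    (hT.integrable_comp_emb (MeasurableEquiv.shearAddRight ℝ).measurableEmbedding).2 hFi
  set G : ℝ → ℝ := fun y => ∫ z, F (z, z + y) with hGdef
  have hIeq : ∫ p, F p ∂((volume : Measure ℝ).prod volume) = ∫ y, G y := by
    rw [← hT.integral_comp (MeasurableEquiv.shearAddRight ℝ).measurableEmbedding F]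
    exact integral_prod_symm _ hHi
  -- evenness of G
  have hGeven : ∀ y, G (-y) = G y := by
    intro y
    have h1 : G (-y) = ∫ z, F (z + y, z) := by
      rw [hGdef]
      simp only
      rw [← integral_add_right_eq_self (fun z => F (z, z + -y)) y]
      simp only [add_neg_cancel_right]
    rw [h1, hGdef]
    refine integral_congr_ae (Filter.Eventually.of_forall fun z => ?_)
    show θ ((z + y) - z) * f₀ (z + y) * f₀ z * Psi a (z + y) z
        = θ (z - (z + y)) * f₀ z * f₀ (z + y) * Psi a z (z + y)
    rw [show (z + y) - z = y by ring, show z - (z + y) = -y by ring, hθe y,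
      Psi_symm a (z + y) z]
    ring
  have habs : ∫ y, G y = 2 * ∫ y in Ioi (0:ℝ), G y := by
    have h2 : ∫ y, G y = ∫ y, G |y| := by
      refine integral_congr_ae (Filter.Eventually.of_forall fun y => ?_)
      show G y = G |y|
      rcases le_or_gt 0 y with h | h
      · rw [abs_of_nonneg h]
      · rw [abs_of_neg h]; exact (hGeven y).symm
    rw [h2, integral_comp_abs]
  -- a.e. slice integrability
  have hslice : ∀ᵐ y : ℝ, Integrable (fun z => F (z, z + y)) := by
    have h := hHi.swap.prod_right_ae
    filter_upwards [h] with y hy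
    exact hy
  -- pointwise identity on Ioi 0
  have hpt : ∀ᵐ y ∂((volume : Measure ℝ).restrict (Ioi (0:ℝ))),
      G y = θ y * ((∫ z in (a - y)..(a - y / 2), f₀ z * f₀ (z + y))
              - ∫ z in (a - y / 2)..a, f₀ z * f₀ (z + y)) := by
    filter_upwards [ae_restrict_of_ae hslice, ae_restrict_mem measurableSet_Ioi] with y hy hy0
    have hy' : (0:ℝ) < y := hy0
    set g : ℝ → ℝ := fun z => f₀ z * f₀ (z + y) with hg
    set A : Set ℝ := Ioc (a - y) (a - y/2) with hA
    set B : Set ℝ := Ioc (a - y/2) a with hB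
    have msA : MeasurableSet A := by rw [hA]; exact measurableSet_Ioc
    have msB : MeasurableSet B := by rw [hB]; exact measurableSet_Ioc
    have hAB : ∀ z, z ∈ A → z ∉ B := by
      intro z hz hz'
      rw [hA, mem_Ioc] at hz; rw [hB, mem_Ioc] at hz'
      linarith [hz.2, hz'.1]
    have hFz : ∀ z : ℝ, F (z, z + y)
        = θ y * (g z * (A.indicator (fun _ => (1:ℝ)) z - B.indicator (fun _ => (1:ℝ)) z)) := by
      intro z
      show θ (z - (z + y)) * f₀ z * f₀ (z + y) * Psi a z (z + y) = _
      rw [show z - (z + y) = -y by ring, hθe y, Psi_indicator a y hy' z, hg]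
      simp only [hA, hB]
      ring
    by_cases hθy : θ y = 0
    · rw [hGdef]
      simp only
      rw [integral_congr_ae (Filter.Eventually.of_forall fun z => by rw [hFz z, hθy, zero_mul])]
      simp [hθy]
    · have hgψ : Integrable (fun z =>
          g z * (A.indicator (fun _ => (1:ℝ)) z - B.indicator (fun _ => (1:ℝ)) z)) := by
        refine (hy.const_mul ((θ y)⁻¹)).congr (Filter.Eventually.of_forall fun z => ?_)
        show (θ y)⁻¹ * F (z, z + y)
          = g z * (A.indicator (fun _ => (1:ℝ)) z - B.indicator (fun _ => (1:ℝ)) z)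
        rw [hFz z, ← mul_assoc, inv_mul_cancel₀ hθy, one_mul]
      have hiA : IntegrableOn g A := by
        rw [← integrable_indicator_iff msA]
        refine (hgψ.indicator msA).congr (Filter.Eventually.of_forall fun z => ?_)
        by_cases hz : z ∈ A
        · have hzB : z ∉ B := hAB z hz
          simp [indicator_of_mem hz, indicator_of_notMem hzB]
        · simp [indicator_of_notMem hz]
      have hiB : IntegrableOn g B := by
        rw [← integrable_indicator_iff msB]
        refine (hgψ.neg.indicator msB).congr (Filter.Eventually.of_forall fun z => ?_)
        by_cases hz : z ∈ B
        · have hzA : z ∉ A := fun h => hAB z h hz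
          simp [indicator_of_mem hz, indicator_of_notMem hzA]
        · simp [indicator_of_notMem hz]
      have hsplit : (fun z => g z * (A.indicator (fun _ => (1:ℝ)) z
          - B.indicator (fun _ => (1:ℝ)) z))
          = fun z => A.indicator g z - B.indicator g z := by
        funext z
        by_cases hz : z ∈ A
        · have hzB : z ∉ B := hAB z hz
          simp [indicator_of_mem hz, indicator_of_notMem hzB]
        · by_cases hz' : z ∈ B
          · simp [indicator_of_mem hz', indicator_of_notMem hz]
          · simp [indicator_of_notMem hz, indicator_of_notMem hz']
      have hcalc : G y = θ y * ((∫ z in A, g z) - ∫ z in B, g z) := by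
        rw [hGdef]
        simp only
        rw [integral_congr_ae (Filter.Eventually.of_forall hFz), integral_const_mul]
        congr 1
        rw [hsplit, integral_sub ((integrable_indicator_iff msA).2 hiA)
          ((integrable_indicator_iff msB).2 hiB), integral_indicator msA, integral_indicator msB]
      have e1 : (∫ z in (a - y)..(a - y/2), g z) = ∫ z in A, g z := by
        rw [hA]; exact intervalIntegral.integral_of_le (by linarith)
      have e2 : (∫ z in (a - y/2)..a, g z) = ∫ z in B, g z := by
        rw [hB]; exact intervalIntegral.integral_of_le (by linarith)
      rw [hcalc, ← e1, ← e2]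
  -- conclude
  have hmu : mu θ f₀ a = ∫ p, F p ∂((volume : Measure ℝ).prod volume) := by
    rw [mu, ← hvol]
  rw [hmu, hIeq, habs]
  congr 1
  exact integral_congr_ae hpt
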